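/- arXiv:0905.4044 — 2 statements merged into one kernel-verified Lean document; each statement's English description precedes it below -/
import Mathlib

section
/- A 0-dimensional hypergroupoid is a constant simplicial set, i.e. a set: if X is a simplicial set such that the maps X_m → Hom(Λ^m_k, X) are surjective for all k ≤ m and bijective for all m > 0, then every face and degeneracy map of X is a bijection. -/
open CategoryTheory Simplicial

/-- The (absolute) partial matching map of a simplicial set `X`:
restriction of `m`-simplices to the horn `Λ[m, k]`. -/
def hornRes (X : SSet) (m : ℕ) (k : Fin (m + 1)) : (Δ[m] ⟶ X) → ((Λ[m, k] : SSet) ⟶ X) :=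
  fun g => Λ[m, k].ι ≫ g

/-- An `n`-dimensional hypergroupoid in the sense of Duskin: every horn has a filler,
and fillers of horns `Λ[m, k]` are unique for `m > n`. -/
def IsHypergroupoid (n : ℕ) (X : SSet) : Prop :=
  (∀ (m : ℕ) (k : Fin (m + 1)), Function.Surjective (hornRes X m k)) ∧
    ∀ (m : ℕ) (k : Fin (m + 1)), m > n → Function.Bijective (hornRes X m k)

namespace Stmt1Aux

open SimplexCategory Opposite

variable (X : SSet)

lemma map_eq_of_faces {m l : ℕ} {k : Fin (m + 2)} {a b : X _⦋m+1⦌}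
    (hab : ∀ j : Fin (m + 2), j ≠ k →
      X.map (SimplexCategory.δ j).op a = X.map (SimplexCategory.δ j).op b)
    (g : (⦋l⦌ : SimplexCategory) ⟶ ⦋m+1⦌)
    (hg : Set.range g.toOrderHom ∪ {k} ≠ Set.univ) :
    X.map g.op a = X.map g.op b := by
  obtain ⟨j, hj⟩ := (Set.ne_univ_iff_exists_notMem _).1 hg
  simp only [Set.mem_union, Set.mem_range, Set.mem_singleton_iff, not_or, not_exists] at hj
  have hfac : factor_δ g j ≫ SimplexCategory.δ j = g :=
    factor_δ_spec g j (fun k' e => hj.1 k' e)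
  rw [← hfac, op_comp, FunctorToTypes.map_comp_apply, FunctorToTypes.map_comp_apply,
    hab j hj.2]

lemma uniq (h : IsHypergroupoid 0 X) {m : ℕ} (k : Fin (m + 2)) (a b : X _⦋m+1⦌)
    (hab : ∀ j : Fin (m + 2), j ≠ k →
      X.map (SimplexCategory.δ j).op a = X.map (SimplexCategory.δ j).op b) :
    a = b := by
  have hinj := (h.2 (m+1) k (Nat.succ_pos m)).1
  have key : hornRes X (m+1) k ((SSet.yonedaEquiv (X := X) (n := ⦋m+1⦌)).symm a)
      = hornRes X (m+1) k ((SSet.yonedaEquiv (X := X) (n := ⦋m+1⦌)).symm b) := by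
    apply SSet.hom_ext
    intro n
    induction n using Opposite.rec with
    | op n =>
      induction n using SimplexCategory.rec with
      | mk l =>
        ext x
        obtain ⟨α, hα⟩ := x
        show X.map (SSet.stdSimplex.objEquiv α).op a = X.map (SSet.stdSimplex.objEquiv α).op b
        exact map_eq_of_faces X hab (SSet.stdSimplex.objEquiv α) hα
  have := hinj key
  simpa using congrArg (SSet.yonedaEquiv (X := X) (n := ⦋m+1⦌)) this

/-- the unique map `⦋0⦌ ⟶ ⦋n⦌` hitting `0`. -/
def pt (n : ℕ) : (⦋0⦌ : SimplexCategory) ⟶ ⦋n⦌ := SimplexCategory.const _ _ 0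

/-- the unique map `⦋n⦌ ⟶ ⦋0⦌`. -/
def toPt (n : ℕ) : (⦋n⦌ : SimplexCategory) ⟶ ⦋0⦌ := SimplexCategory.const _ _ 0

def c (n : ℕ) : X _⦋0⦌ → X _⦋n⦌ := X.map (toPt n).op

def v (n : ℕ) : X _⦋n⦌ → X _⦋0⦌ := X.map (pt n).op

lemma vc (n : ℕ) (x : X _⦋0⦌) : v X n (c X n x) = x := by
  have h0 : pt n ≫ toPt n = 𝟙 (⦋0⦌ : SimplexCategory) :=
    (eq_const_to_zero _).trans const_eq_id
  show X.map (pt n).op (X.map (toPt n).op x) = x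
  rw [← FunctorToTypes.map_comp_apply, ← op_comp, h0]
  simp

lemma main (h : IsHypergroupoid 0 X) : ∀ (n : ℕ) (a : X _⦋n⦌), a = c X n (v X n a) := by
  intro n
  induction n with
  | zero =>
    intro a
    show a = X.map (toPt 0).op (X.map (pt 0).op a)
    have h1 : toPt 0 = 𝟙 (⦋0⦌ : SimplexCategory) := const_eq_id
    have h2 : pt 0 = 𝟙 (⦋0⦌ : SimplexCategory) := const_eq_id
    rw [h1, h2]; simp
  | succ n ih =>
    intro a
    apply uniq X h 0 a _
    intro j hj
    have hR : SimplexCategory.δ j ≫ toPt (n+1) = toPt n := eq_const_to_zero (SimplexCategory.δ j ≫ toPt (n+1))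
    have hL : pt n ≫ SimplexCategory.δ j = pt (n+1) := by
      rw [pt, const_comp]
      congr 1
      exact Fin.succAbove_ne_zero_zero hj
    calc X.map (SimplexCategory.δ j).op a
        = c X n (v X n (X.map (SimplexCategory.δ j).op a)) := ih _
      _ = c X n (X.map ((pt n ≫ SimplexCategory.δ j)).op a) := by
          rw [op_comp, FunctorToTypes.map_comp_apply]; rfl
      _ = c X n (v X (n+1) a) := by rw [hL]; rfl
      _ = X.map (SimplexCategory.δ j).op (c X (n+1) (v X (n+1) a)) := by
          show _ = X.map (SimplexCategory.δ j).op (X.map (toPt (n+1)).op _)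
          rw [← FunctorToTypes.map_comp_apply, ← op_comp, hR]; rfl

lemma c_bij (h : IsHypergroupoid 0 X) (n : ℕ) : Function.Bijective (c X n) :=
  ⟨Function.LeftInverse.injective (g := v X n) (vc X n),
    fun a => ⟨v X n a, (main X h n a).symm⟩⟩

lemma map_bij (h : IsHypergroupoid 0 X) {l n : ℕ} (f : (⦋l⦌ : SimplexCategory) ⟶ ⦋n⦌) :
    Function.Bijective (X.map f.op) := by
  have hc : X.map f.op ∘ c X n = c X l := by
    funext x
    show X.map f.op (X.map (toPt n).op x) = X.map (toPt l).op x
    rw [← FunctorToTypes.map_comp_apply, ← op_comp,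
      show f ≫ toPt n = toPt l from (eq_const_to_zero _).trans (eq_const_to_zero _).symm]
  exact (Function.Bijective.of_comp_iff (X.map f.op) (c_bij X h n)).1 (hc ▸ c_bij X h l)

end Stmt1Aux

/-- A `0`-dimensional hypergroupoid is a constant simplicial set: all its face and
degeneracy maps are bijections. -/
theorem stmt1 (X : SSet) (h : IsHypergroupoid 0 X) :
    (∀ (n : ℕ) (i : Fin (n + 2)),
      Function.Bijective (X.map (SimplexCategory.δ i).op)) ∧
    (∀ (n : ℕ) (i : Fin (n + 1)),
      Function.Bijective (X.map (SimplexCategory.σ i).op)) := by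
  exact ⟨fun n i => Stmt1Aux.map_bij X h (SimplexCategory.δ i),
    fun n i => Stmt1Aux.map_bij X h (SimplexCategory.σ i)⟩
end

section
/- If f : X → Y is a Kan fibration of simplicial sets and g : Y → Z is a morphism such that g∘f is a relative n-dimensional hypergroupoid, then f is a relative n-dimensional hypergroupoid. -/
open CategoryTheory Simplicial

/-- The target of the relative (partial) matching map of `f : X ⟶ Y` against `i : A ⟶ B`:
the fibre product `Hom(A, X) ×_{Hom(A, Y)} Hom(B, Y)`. -/
def RelTarget {X Y A B : SSet} (f : X ⟶ Y) (i : A ⟶ B) : Type _ :=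
  {p : (A ⟶ X) × (B ⟶ Y) // p.1 ≫ f = i ≫ p.2}

/-- The relative (partial) matching map of `f : X ⟶ Y` against `i : A ⟶ B`. -/
def relMatch {X Y A B : SSet} (f : X ⟶ Y) (i : A ⟶ B) (g : B ⟶ X) : RelTarget f i :=
  ⟨(i ≫ g, g ≫ f), Category.assoc i g f⟩

/-- A Kan fibration: all relative partial matching maps against horn inclusions are
surjective. -/
def IsKanFibration {X Y : SSet} (f : X ⟶ Y) : Prop :=
  ∀ (m : ℕ) (k : Fin (m + 1)), Function.Surjective (relMatch f (SSet.horn m k).ι)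

/-- A relative `n`-dimensional hypergroupoid: a Kan fibration whose relative partial
matching maps are bijective in all levels `m > n`. -/
def IsRelHypergroupoid (n : ℕ) {X Y : SSet} (f : X ⟶ Y) : Prop :=
  IsKanFibration f ∧
    ∀ (m : ℕ) (k : Fin (m + 1)), m > n →
      Function.Bijective (relMatch f (SSet.horn m k).ι)

/-- If `f : X → Y` is a Kan fibration and `g : Y → Z` is such that `g ∘ f` is a relative
`n`-dimensional hypergroupoid, then `f` is a relative `n`-dimensional hypergroupoid. -/
theorem stmt3 (n : ℕ) {X Y Z : SSet} (f : X ⟶ Y) (g : Y ⟶ Z)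
    (hf : IsKanFibration f) (hgf : IsRelHypergroupoid n (f ≫ g)) :
    IsRelHypergroupoid n f := by
  refine ⟨hf, fun m k hm => ⟨fun x y hxy => ?_, hf m k⟩⟩
  have h1 : (SSet.horn m k).ι ≫ x = (SSet.horn m k).ι ≫ y :=
    congrArg (fun p => p.1.1) hxy
  have h2 : x ≫ f = y ≫ f := congrArg (fun p => p.1.2) hxy
  exact (hgf.2 m k hm).injective (Subtype.ext (Prod.ext h1 (by
    simp only [relMatch, ← Category.assoc, h2])))
end
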